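/- arXiv:math/0212203 — 2 statements merged into one kernel-verified Lean document; each statement's English description precedes it below -/
import Mathlib

section
/- Let $v_L$ be the monomial valuation on $K=k((X_1,\ldots,X_n))$ associated to a generating set $L=\{B_1,\ldots,B_n\}\subset\mathbf{Z}_{\geq 0}^m\setminus\{0\}$ of $\mathbf{Z}^m$. Let $K_L\subset K$ be the subfield of quotients $f_B/g_B$ of nonzero $L$-homogeneous forms of the same $L$-degree $B$. Then the natural map $K_L\to\Delta_{v_L}$, $f_B/g_B\mapsto f_B/g_B + \mathcal{M}_{v_L}$, is an isomorphism of fields onto the residue field $\Delta_{v_L}$ of $v_L$. -/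
noncomputable instance instLexGrp (m : ℕ) : IsOrderedAddMonoid (Lex (Fin m → ℤ)) :=
  inferInstance

noncomputable instance instLexLinOrd (m : ℕ) : LinearOrder (Lex (Fin m → ℤ)) :=
  inferInstance

noncomputable instance instLexMWZ (m : ℕ) :
    LinearOrderedCommMonoidWithZero (WithZero (Multiplicative (Lex (Fin m → ℤ)))) :=
  (inferInstance : LinearOrderedCommGroupWithZero
    (WithZero (Multiplicative (Lex (Fin m → ℤ))))).toLinearOrderedCommMonoidWithZero

noncomputable def expNeg (m : ℕ) (p : Lex (Fin m → ℤ)) :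
    WithZero (Multiplicative (Lex (Fin m → ℤ))) :=
  (Multiplicative.ofAdd (-p) : Multiplicative (Lex (Fin m → ℤ)))

/-- The `L`-degree of an exponent vector. -/
noncomputable def degL (m n : ℕ) (B : Fin n → (Fin m → ℕ)) (A : Fin n →₀ ℕ) :
    Lex (Fin m → ℤ) :=
  toLex fun j => ∑ i, (A i : ℤ) * (B i j)

-- expNeg lemmas
lemma expNeg_ne_zero (m : ℕ) (p : Lex (Fin m → ℤ)) : expNeg m p ≠ 0 := WithZero.coe_ne_zero

lemma expNeg_add (m : ℕ) (p q : Lex (Fin m → ℤ)) :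
    expNeg m (p + q) = expNeg m p * expNeg m q := by
  simp only [expNeg, ← WithZero.coe_mul, ← ofAdd_add, neg_add]

lemma expNeg_lt_iff (m : ℕ) (p q : Lex (Fin m → ℤ)) : expNeg m p < expNeg m q ↔ q < p := by
  rw [expNeg, expNeg, WithZero.coe_lt_coe, Multiplicative.ofAdd_lt, neg_lt_neg_iff]
  exact Iff.rfl

lemma expNeg_inj (m : ℕ) (p q : Lex (Fin m → ℤ)) (h : expNeg m p = expNeg m q) : p = q := by
  rw [expNeg, expNeg, WithZero.coe_inj, EmbeddingLike.apply_eq_iff_eq, neg_inj] at h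
  exact h

lemma expNeg_div_lt_one (m : ℕ) (p q : Lex (Fin m → ℤ)) (h : q < p) :
    expNeg m p / expNeg m q < 1 := by
  rw [expNeg, expNeg, ← WithZero.coe_div, ← WithZero.coe_one]
  rw [WithZero.coe_lt_coe]
  rw [div_lt_one']
  · exact Multiplicative.ofAdd_lt.2 (by exact neg_lt_neg h)

lemma expNeg_div_self (m : ℕ) (p : Lex (Fin m → ℤ)) : expNeg m p / expNeg m p = 1 :=
  div_self (G₀ := WithZero (Multiplicative (Lex (Fin m → ℤ)))) (expNeg_ne_zero m p)

lemma degL_add (m n : ℕ) (B : Fin n → (Fin m → ℕ)) (A₁ A₂ : Fin n →₀ ℕ) :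
    degL m n B (A₁ + A₂) = degL m n B A₁ + degL m n B A₂ := by
  show toLex _ = toLex _ + toLex _
  rw [← toLex_add]
  congr 1
  funext j
  simp [Finsupp.add_apply, add_mul, Finset.sum_add_distrib]


section aux
variable {m n : ℕ}

lemma lexZ_exists_isLeast (T : Set (Lex (Fin m → ℤ))) (hne : T.Nonempty)
    (h0 : ∀ t ∈ T, ∀ j, 0 ≤ ofLex t j) : ∃ p, IsLeast T p := by
  classical
  set G : (Fin m → ℕ) → Lex (Fin m → ℤ) := fun a => toLex fun j => ((a j : ℤ)) with hGdef
  have hmono : ∀ a b : Fin m → ℕ, Pi.Lex (· < ·) (fun {_} => (· < ·)) a b → G a < G b := by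
    intro a b ⟨i, hi, hl⟩
    have : Pi.Lex (· < ·) (fun {_} => (· < ·)) (ofLex (G a)) (ofLex (G b)) :=
      ⟨i, fun j hj => by show ((a j : ℤ)) = ((b j : ℤ)); rw [hi j hj],
        by show ((a i : ℤ)) < ((b i : ℤ)); exact_mod_cast hl⟩
    exact this
  have key : ∀ t ∈ T, G (fun j => (ofLex t j).toNat) = t := by
    intro t ht
    show (toLex fun j => (((ofLex t j).toNat : ℤ))) = t
    rw [show (fun j => (((ofLex t j).toNat : ℤ))) = ofLex t from
      funext fun j => Int.toNat_of_nonneg (h0 t ht j), toLex_ofLex]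
  have wfι : WellFounded ((· < ·) : Fin m → Fin m → Prop) := wellFounded_lt
  have wf : WellFounded (Pi.Lex (· < ·) (fun {_} => (· < ·)) : (Fin m → ℕ) → _ → Prop) :=
    Pi.Lex.wellFounded (· < ·) fun _ => wellFounded_lt
  obtain ⟨t, ht⟩ := hne
  have hU : {a : Fin m → ℕ | G a ∈ T}.Nonempty :=
    ⟨fun j => (ofLex t j).toNat, by simp only [Set.mem_setOf_eq, key t ht]; exact ht⟩
  obtain ⟨u, huU, hmin⟩ := wf.has_min _ hU
  refine ⟨G u, huU, fun t' ht' => ?_⟩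
  rw [← key t' ht']
  have hmem : (fun j => (ofLex t' j).toNat) ∈ {a : Fin m → ℕ | G a ∈ T} := by
    simp only [Set.mem_setOf_eq, key t' ht']; exact ht'
  have hnlt := hmin _ hmem
  rcases @trichotomous _ _ (Pi.isTrichotomous_lex ((· < ·) : Fin m → Fin m → Prop)
      (fun {_} => ((· < ·) : ℕ → ℕ → Prop)) wfι) u (fun j => (ofLex t' j).toNat)
    with h | h | h
  · exact le_of_lt (hmono _ _ h)
  · rw [h]
  · exact absurd h hnlt
end aux

section aux2
variable {k : Type*} [Field k] {m n : ℕ} {B : Fin n → (Fin m → ℕ)}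

lemma exists_coeff_ne_zero {f : MvPowerSeries (Fin n) k} (hf : f ≠ 0) :
    ∃ A, MvPowerSeries.coeff A f ≠ 0 := by
  by_contra h
  push_neg at h
  exact hf (MvPowerSeries.ext fun A => by simp [h A])

lemma degL_nonneg (A : Fin n →₀ ℕ) (j : Fin m) : 0 ≤ ofLex (degL m n B A) j := by
  show (0:ℤ) ≤ ∑ i, (A i : ℤ) * (B i j)
  exact Finset.sum_nonneg fun i _ => mul_nonneg (Int.natCast_nonneg _) (Int.natCast_nonneg _)

lemma homog_mul {f g : MvPowerSeries (Fin n) k} {b c : Lex (Fin m → ℤ)}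
    (hf : ∀ A, MvPowerSeries.coeff A f ≠ 0 → degL m n B A = b)
    (hg : ∀ A, MvPowerSeries.coeff A g ≠ 0 → degL m n B A = c) :
    ∀ A, MvPowerSeries.coeff A (f * g) ≠ 0 → degL m n B A = b + c := by
  classical
  intro A hA
  rw [MvPowerSeries.coeff_mul] at hA
  obtain ⟨p, hp, hne⟩ := Finset.exists_ne_zero_of_sum_ne_zero hA
  rw [← Finset.HasAntidiagonal.mem_antidiagonal.1 hp, degL_add, hf _ (left_ne_zero_of_mul hne),
    hg _ (right_ne_zero_of_mul hne)]

variable (v : Valuation (FractionRing (MvPowerSeries (Fin n) k))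
      (WithZero (Multiplicative (Lex (Fin m → ℤ)))))
    (hmono : ∀ f : MvPowerSeries (Fin n) k, f ≠ 0 → ∀ p : Lex (Fin m → ℤ),
      IsLeast (degL m n B '' {A | MvPowerSeries.coeff A f ≠ 0}) p →
      v (algebraMap (MvPowerSeries (Fin n) k) (FractionRing (MvPowerSeries (Fin n) k)) f) =
        expNeg m p)

include hmono in
lemma exists_val {f : MvPowerSeries (Fin n) k} (hf : f ≠ 0) :
    ∃ p, IsLeast (degL m n B '' {A | MvPowerSeries.coeff A f ≠ 0}) p ∧
      v (algebraMap (MvPowerSeries (Fin n) k) (FractionRing (MvPowerSeries (Fin n) k)) f) =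
        expNeg m p := by
  have hne : {A | MvPowerSeries.coeff A f ≠ 0}.Nonempty := exists_coeff_ne_zero hf
  obtain ⟨p, hp⟩ := lexZ_exists_isLeast (degL m n B '' {A | MvPowerSeries.coeff A f ≠ 0})
    (hne.image _) (by rintro t ⟨A, _, rfl⟩ j; exact degL_nonneg A j)
  exact ⟨p, hp, hmono f hf p hp⟩

include hmono in
lemma val_homog {f : MvPowerSeries (Fin n) k} (hf : f ≠ 0) {b : Lex (Fin m → ℤ)}
    (hhom : ∀ A, MvPowerSeries.coeff A f ≠ 0 → degL m n B A = b) :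
    v (algebraMap (MvPowerSeries (Fin n) k) (FractionRing (MvPowerSeries (Fin n) k)) f) =
      expNeg m b := by
  refine hmono f hf b ⟨?_, ?_⟩
  · obtain ⟨A, hA⟩ := exists_coeff_ne_zero hf
    exact ⟨A, hA, hhom A hA⟩
  · rintro t ⟨A, hA, rfl⟩
    rw [hhom A hA]

end aux2

/-- The residue field of the monomial valuation `v_L` is (isomorphic via the natural map,
i.e. via reduction modulo the maximal ideal `M_{v_L}`, to) the subfield `K_L ⊆ K` of
quotients `f_B/g_B` of nonzero `L`-homogeneous forms of the same `L`-degree `B`: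
every element of `K_L` is a unit of the valuation ring, distinct elements of `K_L` have
distinct residues, and every residue is the residue of an element of `K_L`. -/
theorem residue_field_of_monomial_valuation (k : Type*) [Field k] (m n : ℕ)
    (B : Fin n → (Fin m → ℕ)) (hB : ∀ i, B i ≠ 0)
    (hgen : AddSubgroup.closure (Set.range fun i => fun j => (B i j : ℤ)) = ⊤)
    (v : Valuation (FractionRing (MvPowerSeries (Fin n) k))
      (WithZero (Multiplicative (Lex (Fin m → ℤ)))))
    -- `v` is the monomial valuation associated to `L`:
    (hmono : ∀ f : MvPowerSeries (Fin n) k, f ≠ 0 → ∀ p : Lex (Fin m → ℤ),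
      IsLeast (degL m n B '' {A | MvPowerSeries.coeff A f ≠ 0}) p →
      v (algebraMap (MvPowerSeries (Fin n) k) (FractionRing (MvPowerSeries (Fin n) k)) f) =
        expNeg m p)
    -- `S` is the set of quotients of nonzero `L`-forms of the same `L`-degree:
    (S : Set (FractionRing (MvPowerSeries (Fin n) k)))
    (hS : S = {x | ∃ (b : Lex (Fin m → ℤ)) (f g : MvPowerSeries (Fin n) k), f ≠ 0 ∧ g ≠ 0 ∧
      (∀ A, MvPowerSeries.coeff A f ≠ 0 → degL m n B A = b) ∧
      (∀ A, MvPowerSeries.coeff A g ≠ 0 → degL m n B A = b) ∧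
      x = algebraMap (MvPowerSeries (Fin n) k) (FractionRing (MvPowerSeries (Fin n) k)) f /
        algebraMap (MvPowerSeries (Fin n) k) (FractionRing (MvPowerSeries (Fin n) k)) g}) :
    (∀ x ∈ S, v x = 1) ∧
    (∀ x ∈ S, ∀ y ∈ S, v (x - y) < 1 → x = y) ∧
    (∀ x : FractionRing (MvPowerSeries (Fin n) k), v x = 1 → ∃ y ∈ S, v (x - y) < 1) := by
  classical
  subst hS
  set P := MvPowerSeries (Fin n) k with hP
  set K := FractionRing P with hK
  set ι := algebraMap P K with hι
  have hinj : Function.Injective ι := IsFractionRing.injective P K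
  have hι0 : ∀ f : P, f ≠ 0 → ι f ≠ 0 := by
    intro f hf h
    exact hf (hinj (by rw [h, map_zero]))
  refine ⟨?_, ?_, ?_⟩
  · -- Part 1
    rintro x ⟨b, f, g, hf, hg, hfb, hgb, rfl⟩
    rw [Valuation.map_div, val_homog v hmono hf hfb, val_homog v hmono hg hgb, expNeg_div_self]
  · -- Part 2
    rintro x ⟨b, f, g, hf, hg, hfb, hgb, rfl⟩ y ⟨c, f', g', hf', hg', hfc, hgc, rfl⟩ hlt
    have hgg' : g * g' ≠ 0 := by
      intro h
      exact mul_ne_zero (hι0 g hg) (hι0 g' hg') (by rw [← map_mul, h, map_zero])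
    have hEq : ι f / ι g - ι f' / ι g' = ι (f * g' - f' * g) / ι (g * g') := by
      rw [div_sub_div _ _ (hι0 g hg) (hι0 g' hg'), ← map_mul, ← map_mul, ← map_sub, ← map_mul,
        mul_comm g f']
    by_cases hzero : f * g' - f' * g = 0
    · rw [div_eq_div_iff (hι0 g hg) (hι0 g' hg'), ← map_mul, ← map_mul,
        sub_eq_zero.1 hzero]
    · exfalso
      have hhom : ∀ A, MvPowerSeries.coeff A (f * g' - f' * g) ≠ 0 →
          degL m n B A = b + c := by
        intro A hA
        rw [map_sub] at hA
        by_cases h1 : MvPowerSeries.coeff A (f * g') = 0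
        · have h2 : MvPowerSeries.coeff A (f' * g) ≠ 0 := by
            intro h2; rw [h1, h2, sub_zero] at hA; exact hA rfl
          rw [homog_mul hfc hgb A h2, add_comm]
        · exact homog_mul hfb hgc A h1
      have hden : ∀ A, MvPowerSeries.coeff A (g * g') ≠ 0 → degL m n B A = b + c :=
        homog_mul hgb hgc
      rw [hEq, Valuation.map_div, val_homog v hmono hzero hhom,
        val_homog v hmono hgg' hden, expNeg_div_self] at hlt
      exact lt_irrefl 1 hlt
  · -- Part 3
    intro x hx
    obtain ⟨a, d, hd, hxeq⟩ := IsFractionRing.div_surjective (A := P) x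
    have hd0 : d ≠ 0 := nonZeroDivisors.ne_zero hd
    have ha0 : a ≠ 0 := by
      rintro rfl
      rw [← hxeq, map_zero, zero_div, map_zero] at hx
      exact zero_ne_one hx
    obtain ⟨p, hpl, hvp⟩ := exists_val v hmono ha0
    obtain ⟨q, hql, hvq⟩ := exists_val v hmono hd0
    have hpq : p = q := by
      have h1 : expNeg m p / expNeg m q = 1 := by
        rw [← hvp, ← hvq, ← Valuation.map_div, hxeq, hx]
      exact expNeg_inj m p q ((div_eq_one_iff_eq (expNeg_ne_zero m q)).1 h1)
    subst hpq
    set f₀ : P := (fun A => if degL m n B A = p then MvPowerSeries.coeff A a else 0 : (Fin n →₀ ℕ) → k) with hf₀def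
    set g₀ : P := (fun A => if degL m n B A = p then MvPowerSeries.coeff A d else 0 : (Fin n →₀ ℕ) → k) with hg₀def
    have hf₀c : ∀ A, MvPowerSeries.coeff A f₀ =
        if degL m n B A = p then MvPowerSeries.coeff A a else 0 := fun A => rfl
    have hg₀c : ∀ A, MvPowerSeries.coeff A g₀ =
        if degL m n B A = p then MvPowerSeries.coeff A d else 0 := fun A => rfl
    have homf₀ : ∀ A, MvPowerSeries.coeff A f₀ ≠ 0 → degL m n B A = p := by
      intro A hA
      by_contra h
      rw [hf₀c A, if_neg h] at hA
      exact hA rfl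
    have homg₀ : ∀ A, MvPowerSeries.coeff A g₀ ≠ 0 → degL m n B A = p := by
      intro A hA
      by_contra h
      rw [hg₀c A, if_neg h] at hA
      exact hA rfl
    have hf₀ne : f₀ ≠ 0 := by
      obtain ⟨A, hA, hdeg⟩ := hpl.1
      intro h
      apply hA
      have := hf₀c A
      rw [h, map_zero, if_pos hdeg] at this
      exact this.symm
    have hg₀ne : g₀ ≠ 0 := by
      obtain ⟨A, hA, hdeg⟩ := hql.1
      intro h
      apply hA
      have := hg₀c A
      rw [h, map_zero, if_pos hdeg] at this
      exact this.symm
    refine ⟨ι f₀ / ι g₀, ⟨p, f₀, g₀, hf₀ne, hg₀ne, homf₀, homg₀, rfl⟩, ?_⟩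
    have hdg₀ : d * g₀ ≠ 0 := by
      intro h
      exact mul_ne_zero (hι0 d hd0) (hι0 g₀ hg₀ne) (by rw [← map_mul, h, map_zero])
    have hEq : x - ι f₀ / ι g₀ = ι (a * g₀ - f₀ * d) / ι (d * g₀) := by
      rw [← hxeq, div_sub_div _ _ (hι0 d hd0) (hι0 g₀ hg₀ne), ← map_mul, ← map_mul,
        ← map_sub, ← map_mul, mul_comm d f₀]
    have hvden : v (ι (d * g₀)) = expNeg m (p + p) := by
      rw [map_mul, Valuation.map_mul, hvq, val_homog v hmono hg₀ne homg₀, expNeg_add]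
    by_cases hzero : a * g₀ - f₀ * d = 0
    · rw [hEq, hzero, map_zero, zero_div, Valuation.map_zero]
      exact lt_of_le_of_ne zero_le_one (by simp)
    · -- lower bound on degrees of the remainder
      have hlow : ∀ A, MvPowerSeries.coeff A (a * g₀ - f₀ * d) ≠ 0 →
          p + p ≤ degL m n B A := by
        intro A hA
        rw [map_sub] at hA
        have : MvPowerSeries.coeff A (a * g₀) ≠ 0 ∨ MvPowerSeries.coeff A (f₀ * d) ≠ 0 := by
          by_contra h
          push_neg at h
          rw [h.1, h.2, sub_zero] at hA
          exact hA rfl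
        rcases this with h1 | h1
        · rw [MvPowerSeries.coeff_mul] at h1
          obtain ⟨pr, hpr, hne⟩ := Finset.exists_ne_zero_of_sum_ne_zero h1
          have hu : p ≤ degL m n B pr.1 :=
            hpl.2 ⟨pr.1, left_ne_zero_of_mul hne, rfl⟩
          have hw : degL m n B pr.2 = p := homg₀ _ (right_ne_zero_of_mul hne)
          rw [← Finset.HasAntidiagonal.mem_antidiagonal.1 hpr, degL_add, hw]
          exact add_le_add_left hu p
        · rw [MvPowerSeries.coeff_mul] at h1
          obtain ⟨pr, hpr, hne⟩ := Finset.exists_ne_zero_of_sum_ne_zero h1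
          have hu : degL m n B pr.1 = p := homf₀ _ (left_ne_zero_of_mul hne)
          have hw : p ≤ degL m n B pr.2 :=
            hql.2 ⟨pr.2, right_ne_zero_of_mul hne, rfl⟩
          rw [← Finset.HasAntidiagonal.mem_antidiagonal.1 hpr, degL_add, hu]
          exact add_le_add_right hw p
      have hvanish : ∀ A, degL m n B A = p + p →
          MvPowerSeries.coeff A (a * g₀ - f₀ * d) = 0 := by
        intro A hdeg
        rw [map_sub, MvPowerSeries.coeff_mul, MvPowerSeries.coeff_mul, sub_eq_zero]
        refine Finset.sum_congr rfl ?_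
        rintro ⟨u, w⟩ hm
        have hsum : degL m n B u + degL m n B w = p + p := by
          rw [← degL_add, Finset.HasAntidiagonal.mem_antidiagonal.1 hm, hdeg]
        simp only
        rw [hf₀c u, hg₀c w]
        by_cases hu : degL m n B u = p
        · have hw : degL m n B w = p := by
            rw [hu] at hsum
            exact add_left_cancel hsum
          rw [if_pos hu, if_pos hw]
        · have hw : degL m n B w ≠ p := fun hw => hu (by
            rw [hw] at hsum
            exact add_right_cancel hsum)
          rw [if_neg hu, if_neg hw, mul_zero, zero_mul]
      obtain ⟨r, hrl, hvr⟩ := exists_val v hmono hzero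
      obtain ⟨A, hA, hdegA⟩ := hrl.1
      have hgt : p + p < r := by
        rcases lt_or_eq_of_le (hdegA ▸ hlow A hA) with h | h
        · exact h
        · exact absurd (hvanish A (hdegA ▸ h.symm)) hA
      rw [hEq, Valuation.map_div, hvr, hvden]
      exact expNeg_div_lt_one m r (p + p) hgt
end

section
/- Let $L$ be a field, $L[[Z_1,Z_2]]$ the power series ring, and let $z_1,z_2$ be elements of a complete local $L$-algebra domain that are formally independent over $L$ (i.e., the map $L[[Z_1,Z_2]]\to L[[z_1,z_2]]$ is injective). If $z_2/z_1$ lies in the maximal ideal, then $z_1$ and $z_2/z_1$ are also formally independent over $L$. -/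
/-- The substitution `f(Z₁, Z₂) ↦ f(Z₁, Z₁·Z₂)`, written coefficientwise: the coefficient
of `Z₁^a Z₂^b` in the result is the coefficient of `Z₁^(a-b) Z₂^b` in `f` when `b ≤ a`,
and `0` otherwise. -/
noncomputable def blowSub (L : Type*) [Field L] (f : MvPowerSeries (Fin 2) L) :
    MvPowerSeries (Fin 2) L :=
  fun A : Fin 2 →₀ ℕ =>
    if A 1 ≤ A 0 then
      MvPowerSeries.coeff (Finsupp.single 0 (A 0 - A 1) + Finsupp.single 1 (A 1)) f
    else 0

open Finsupp MvPowerSeries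

/-- `e a b` is the exponent `Z₁^a Z₂^b`. -/
noncomputable def e (a b : ℕ) : Fin 2 →₀ ℕ := Finsupp.single 0 a + Finsupp.single 1 b

@[simp] lemma e_apply_zero (a b : ℕ) : (e a b) 0 = a := by
  simp [e, Finsupp.single_apply]

@[simp] lemma e_apply_one (a b : ℕ) : (e a b) 1 = b := by
  simp [e, Finsupp.single_apply]

lemma e_eq_self (A : Fin 2 →₀ ℕ) : e (A 0) (A 1) = A := by
  ext i
  fin_cases i
  · simpa using e_apply_zero (A 0) (A 1)
  · simpa using e_apply_one (A 0) (A 1)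

lemma e_add (a b a' b' : ℕ) : e a b + e a' b' = e (a + a') (b + b') := by
  ext i
  fin_cases i
  · simp
  · simp

lemma e_sub (a b x y : ℕ) : e a b - e x y = e (a - x) (b - y) := by
  ext i
  fin_cases i
  · simpa using (Finsupp.tsub_apply (e a b) (e x y) 0).trans (by simp)
  · simpa using (Finsupp.tsub_apply (e a b) (e x y) 1).trans (by simp)

lemma e_le_e {x y a b : ℕ} : e x y ≤ e a b ↔ x ≤ a ∧ y ≤ b := by
  rw [Finsupp.le_def]
  constructor
  · intro h
    exact ⟨by simpa using h 0, by simpa using h 1⟩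
  · intro ⟨h1, h2⟩ i
    fin_cases i
    · simpa using h1
    · simpa using h2

lemma coeff_mul_e {L : Type*} [Field L] (f g : MvPowerSeries (Fin 2) L) (a b : ℕ) :
    MvPowerSeries.coeff (e a b) (f * g) =
      ∑ i ∈ Finset.range (a + 1), ∑ j ∈ Finset.range (b + 1),
        MvPowerSeries.coeff (e i j) f * MvPowerSeries.coeff (e (a - i) (b - j)) g := by
  rw [MvPowerSeries.coeff_mul, ← Finset.sum_product']
  refine Finset.sum_nbij' (fun p => (p.1 0, p.1 1))
    (fun q => (e q.1 q.2, e (a - q.1) (b - q.2))) ?_ ?_ ?_ ?_ ?_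
  · intro p hp
    rw [Finset.HasAntidiagonal.mem_antidiagonal] at hp
    have h0 : p.1 0 + p.2 0 = a := by
      have := DFunLike.congr_fun hp 0
      simpa [Finsupp.add_apply] using this
    have h1 : p.1 1 + p.2 1 = b := by
      have := DFunLike.congr_fun hp 1
      simpa [Finsupp.add_apply] using this
    simp only [Finset.mem_product, Finset.mem_range]
    omega
  · intro q hq
    simp only [Finset.mem_product, Finset.mem_range] at hq
    rw [Finset.HasAntidiagonal.mem_antidiagonal, e_add]
    congr 1 <;> omega
  · intro p hp
    rw [Finset.HasAntidiagonal.mem_antidiagonal] at hp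
    have h0 : p.1 0 + p.2 0 = a := by
      have := DFunLike.congr_fun hp 0
      simpa [Finsupp.add_apply] using this
    have h1 : p.1 1 + p.2 1 = b := by
      have := DFunLike.congr_fun hp 1
      simpa [Finsupp.add_apply] using this
    have e1 : e (p.1 0) (p.1 1) = p.1 := e_eq_self p.1
    have e2 : e (a - p.1 0) (b - p.1 1) = p.2 := by
      rw [show a - p.1 0 = p.2 0 by omega, show b - p.1 1 = p.2 1 by omega]
      exact e_eq_self p.2
    exact Prod.ext e1 e2
  · intro q hq
    simp
  · intro p hp
    rw [Finset.HasAntidiagonal.mem_antidiagonal] at hp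
    have h0 : p.1 0 + p.2 0 = a := by
      have := DFunLike.congr_fun hp 0
      simpa [Finsupp.add_apply] using this
    have h1 : p.1 1 + p.2 1 = b := by
      have := DFunLike.congr_fun hp 1
      simpa [Finsupp.add_apply] using this
    rw [show e (p.1 0) (p.1 1) = p.1 from e_eq_self p.1]
    congr 1
    rw [show a - p.1 0 = p.2 0 by omega, show b - p.1 1 = p.2 1 by omega,
      e_eq_self p.2]

section WDiv

variable {L : Type*} [Field L]

/-- Coefficients of the Weierstrass-type inverse series. -/
noncomputable def wdiv (f : MvPowerSeries (Fin 2) L) (m : ℕ) : ℕ → ℕ → L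
  | a, b =>
    if b = 0 then (if a = 0 then 1 else 0)
    else
      -(MvPowerSeries.coeff (e 0 m) f)⁻¹ *
        ((∑ p ∈ (Finset.range a).attach, ∑ j ∈ Finset.range (b + m + 1),
            wdiv f m p.1 j * MvPowerSeries.coeff (e (a - p.1) (b + m - j)) f) +
          ∑ q ∈ (Finset.range b).attach,
            wdiv f m a q.1 * MvPowerSeries.coeff (e 0 (b + m - q.1)) f)
  termination_by a b => (a, b)
  decreasing_by
  · exact Prod.Lex.left _ _ (Finset.mem_range.mp p.2)
  · exact Prod.Lex.right _ (Finset.mem_range.mp q.2)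

lemma wdiv_zero_zero (f : MvPowerSeries (Fin 2) L) (m : ℕ) : wdiv f m 0 0 = 1 := by
  rw [wdiv]
  simp

/-- The power series with coefficients `wdiv`. -/
noncomputable def wser (f : MvPowerSeries (Fin 2) L) (m : ℕ) : MvPowerSeries (Fin 2) L :=
  fun A => wdiv f m (A 0) (A 1)

lemma coeff_wser (f : MvPowerSeries (Fin 2) L) (m : ℕ) (x y : ℕ) :
    MvPowerSeries.coeff (e x y) (wser f m) = wdiv f m x y := by
  rw [MvPowerSeries.coeff_apply]
  show wdiv f m ((e x y) 0) ((e x y) 1) = wdiv f m x y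
  rw [e_apply_zero, e_apply_one]

lemma wser_spec (f : MvPowerSeries (Fin 2) L) (m : ℕ)
    (hm0 : MvPowerSeries.coeff (e 0 m) f ≠ 0)
    (hml : ∀ j < m, MvPowerSeries.coeff (e 0 j) f = 0)
    (a B : ℕ) (hB : m < B) :
    MvPowerSeries.coeff (e a B) (f * wser f m) = 0 := by
  obtain ⟨b, rfl⟩ : ∃ b, B = b + m := ⟨B - m, by omega⟩
  have hb : b ≠ 0 := by omega
  rw [mul_comm, coeff_mul_e]
  simp only [coeff_wser]
  rw [Finset.sum_range_succ]
  have hrow : ∑ j ∈ Finset.range (b + m + 1),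
      wdiv f m a j * MvPowerSeries.coeff (e (a - a) (b + m - j)) f
      = (∑ j ∈ Finset.range b,
          wdiv f m a j * MvPowerSeries.coeff (e 0 (b + m - j)) f)
        + wdiv f m a b * MvPowerSeries.coeff (e 0 m) f := by
    rw [Nat.sub_self]
    have h1 : e 0 m = e 0 (b + m - b) := by congr 1; omega
    rw [h1, ← Finset.sum_range_succ
      (fun j => wdiv f m a j * MvPowerSeries.coeff (e 0 (b + m - j)) f) b]
    symm
    apply Finset.sum_subset
    · intro x hx
      simp only [Finset.mem_range] at hx ⊢
      omega
    · intro x hx hnx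
      simp only [Finset.mem_range] at hx hnx
      rw [hml (b + m - x) (by omega)]
      ring
  rw [hrow]
  have hH : wdiv f m a b * MvPowerSeries.coeff (e 0 m) f =
      -((∑ p ∈ Finset.range a, ∑ j ∈ Finset.range (b + m + 1),
          wdiv f m p j * MvPowerSeries.coeff (e (a - p) (b + m - j)) f) +
        ∑ q ∈ Finset.range b,
          wdiv f m a q * MvPowerSeries.coeff (e 0 (b + m - q)) f) := by
    rw [wdiv, if_neg hb]
    rw [Finset.sum_attach (Finset.range a)
      (fun p => ∑ j ∈ Finset.range (b + m + 1),
        wdiv f m p j * MvPowerSeries.coeff (e (a - p) (b + m - j)) f)]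
    rw [Finset.sum_attach (Finset.range b)
      (fun q => wdiv f m a q * MvPowerSeries.coeff (e 0 (b + m - q)) f)]
    field_simp
  rw [hH]
  ring

end WDiv

section Key

variable {L : Type*} [Field L]

lemma main_case (f : MvPowerSeries (Fin 2) L)
    (hex : ∃ b, MvPowerSeries.coeff (e 0 b) f ≠ 0) :
    ∃ h : MvPowerSeries (Fin 2) L, h ≠ 0 ∧
      ∀ a b, a < b → MvPowerSeries.coeff (e a b) (f * h) = 0 := by
  classical
  set m := Nat.find hex with hm
  have hm0 : MvPowerSeries.coeff (e 0 m) f ≠ 0 := Nat.find_spec hex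
  have hml : ∀ j < m, MvPowerSeries.coeff (e 0 j) f = 0 := by
    intro j hj
    by_contra hc
    exact (Nat.find_min hex hj) hc
  refine ⟨MvPowerSeries.X 0 ^ m * wser f m, ?_, ?_⟩
  · intro h0
    have h1 : MvPowerSeries.coeff (e m 0) (MvPowerSeries.X 0 ^ m * wser f m) = 1 := by
      rw [MvPowerSeries.X_pow_eq, MvPowerSeries.coeff_monomial_mul]
      rw [show (Finsupp.single 0 m : Fin 2 →₀ ℕ) = e m 0 by simp [e]]
      rw [if_pos le_rfl, e_sub, Nat.sub_self, Nat.sub_self, coeff_wser, wdiv_zero_zero,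
        one_mul]
    rw [h0] at h1
    simp at h1
  · intro a b hab
    rw [mul_left_comm, MvPowerSeries.X_pow_eq, MvPowerSeries.coeff_monomial_mul]
    rw [show (Finsupp.single 0 m : Fin 2 →₀ ℕ) = e m 0 by simp [e]]
    by_cases hma : e m 0 ≤ e a b
    · rw [if_pos hma, e_sub, Nat.sub_zero, one_mul]
      have hma' : m ≤ a := (e_le_e.mp hma).1
      exact wser_spec f m hm0 hml (a - m) b (by omega)
    · rw [if_neg hma]

lemma key (a₀ : ℕ) : ∀ (f : MvPowerSeries (Fin 2) L) (b₀ : ℕ),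
    MvPowerSeries.coeff (e a₀ b₀) f ≠ 0 →
    ∃ h : MvPowerSeries (Fin 2) L, h ≠ 0 ∧
      ∀ a b, a < b → MvPowerSeries.coeff (e a b) (f * h) = 0 := by
  induction a₀ with
  | zero =>
    intro f b₀ hf
    exact main_case f ⟨b₀, hf⟩
  | succ n ih =>
    intro f b₀ hf
    by_cases hex : ∃ b, MvPowerSeries.coeff (e 0 b) f ≠ 0
    · exact main_case f hex
    · push_neg at hex
      set f' : MvPowerSeries (Fin 2) L :=
        (fun A => MvPowerSeries.coeff (e (A 0 + 1) (A 1)) f) with hf'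
      have hcoeff' : ∀ x y, MvPowerSeries.coeff (e x y) f' =
          MvPowerSeries.coeff (e (x + 1) y) f := by
        intro x y
        rw [MvPowerSeries.coeff_apply]
        show MvPowerSeries.coeff (e ((e x y) 0 + 1) ((e x y) 1)) f = _
        rw [e_apply_zero, e_apply_one]
      have hXmon : (MvPowerSeries.X 0 : MvPowerSeries (Fin 2) L)
          = MvPowerSeries.monomial (e 1 0) 1 := by
        rw [show e 1 0 = Finsupp.single 0 1 by simp [e], ← MvPowerSeries.X_pow_eq, pow_one]
      have hXf : f = MvPowerSeries.X 0 * f' := by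
        apply MvPowerSeries.ext
        intro A
        rw [← e_eq_self A]
        rw [hXmon, MvPowerSeries.coeff_monomial_mul]
        by_cases h1 : e 1 0 ≤ e (A 0) (A 1)
        · rw [if_pos h1, e_sub, Nat.sub_zero, one_mul, hcoeff']
          have h2 : 1 ≤ A 0 := (e_le_e.mp h1).1
          rw [show A 0 - 1 + 1 = A 0 by omega]
        · rw [if_neg h1]
          have h2 : ¬(1 ≤ A 0 ∧ 0 ≤ A 1) := fun hc => h1 (e_le_e.mpr hc)
          rw [show A 0 = 0 by omega]
          exact hex (A 1)
      have hf'' : MvPowerSeries.coeff (e n b₀) f' ≠ 0 := by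
        rw [hcoeff']
        exact hf
      obtain ⟨h, hh0, hh⟩ := ih f' b₀ hf''
      refine ⟨h, hh0, ?_⟩
      intro a b hab
      rw [hXf, mul_assoc, hXmon, MvPowerSeries.coeff_monomial_mul]
      by_cases h1 : e 1 0 ≤ e a b
      · rw [if_pos h1, e_sub, Nat.sub_zero, one_mul]
        exact hh (a - 1) b (by omega)
      · rw [if_neg h1]

end Key

lemma blowSub_zero (L : Type*) [Field L] : blowSub L 0 = 0 := by
  funext A
  simp only [blowSub, map_zero]
  split <;> rfl

/-- Blowing up preserves formal independence: let `S` be a local `L`-algebra domain and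
`ψ : L[[Z₁,Z₂]] → S` an evaluation at `(z₁, z₂/z₁)`, with `z₁` and `z₂/z₁` in the maximal
ideal.  If `z₁, z₂ = z₁·(z₂/z₁)` are formally independent over `L` (i.e. the evaluation
`f ↦ f(z₁, z₂) = ψ(f(Z₁, Z₁Z₂))` is injective), then `z₁` and `z₂/z₁` are also formally
independent over `L` (i.e. `ψ` itself is injective). -/
theorem blowup_preserves_formal_independence (L S : Type*) [Field L] [CommRing S]
    [IsDomain S] [IsLocalRing S] [Algebra L S]
    (ψ : MvPowerSeries (Fin 2) L →ₐ[L] S)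
    (hz1 : ψ (MvPowerSeries.X 0) ∈ IsLocalRing.maximalIdeal S)
    (hw : ψ (MvPowerSeries.X 1) ∈ IsLocalRing.maximalIdeal S)
    (hindep : Function.Injective fun f : MvPowerSeries (Fin 2) L => ψ (blowSub L f)) :
    Function.Injective ψ := by
  rw [injective_iff_map_eq_zero]
  intro f hf
  by_contra hne
  obtain ⟨A, hA⟩ : ∃ A, MvPowerSeries.coeff A f ≠ 0 := by
    by_contra hc
    push_neg at hc
    exact hne (MvPowerSeries.ext fun A => by rw [hc A, map_zero])
  rw [← e_eq_self A] at hA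
  obtain ⟨h, hh0, hvan⟩ := key (A 0) f (A 1) hA
  -- `f * h` lies in the image of `blowSub`
  set H : MvPowerSeries (Fin 2) L :=
    (fun B => MvPowerSeries.coeff (e (B 0 + B 1) (B 1)) (f * h)) with hH
  have hcoeffH : ∀ x y, MvPowerSeries.coeff (e x y) H =
      MvPowerSeries.coeff (e (x + y) y) (f * h) := by
    intro x y
    rw [MvPowerSeries.coeff_apply]
    show MvPowerSeries.coeff (e ((e x y) 0 + (e x y) 1) ((e x y) 1)) (f * h) = _
    rw [e_apply_zero, e_apply_one]
  have hblow : blowSub L H = f * h := by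
    funext B
    show (if B 1 ≤ B 0 then
        MvPowerSeries.coeff (Finsupp.single 0 (B 0 - B 1) + Finsupp.single 1 (B 1)) H
      else 0) = (f * h) B
    have hfhB : (f * h) B = MvPowerSeries.coeff (e (B 0) (B 1)) (f * h) := by
      rw [e_eq_self, MvPowerSeries.coeff_apply]
    by_cases hle : B 1 ≤ B 0
    · rw [if_pos hle]
      rw [show (Finsupp.single 0 (B 0 - B 1) + Finsupp.single 1 (B 1) : Fin 2 →₀ ℕ)
        = e (B 0 - B 1) (B 1) from rfl]
      rw [hcoeffH, show B 0 - B 1 + B 1 = B 0 by omega, hfhB]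
    · rw [if_neg hle, hfhB]
      exact (hvan (B 0) (B 1) (by omega)).symm
  have hψ : ψ (blowSub L H) = ψ (blowSub L 0) := by
    rw [hblow, blowSub_zero, map_zero, map_mul, hf, zero_mul]
  have hH0 : H = 0 := hindep hψ
  have : f * h = 0 := by rw [← hblow, hH0, blowSub_zero]
  rcases mul_eq_zero.mp this with h1 | h2
  · exact hne h1
  · exact hh0 h2
end
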